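/- Define K₀(z,w;T) = (z w̄ / π) e^{-(z² + w̄²)/(4T)} (1/(z² + w̄²)² + 1/(4T(z² + w̄²))) for z, w in the sector Δ = {z ∈ ℂ : |arg z| < π/4} and T > 0. Then the double series Σ_{m,n ∈ ℤ} K₀(z + 2n, w + 2m; T) converges absolutely and uniformly on cl(D) × D, where D is the open square with vertices 0, 1+i, 2, 1-i. -/

import Mathlib

open Complex Filter

/-- The open square `D` with vertices `0, 1+i, 2, 1-i`, viewed in `ℂ`. -/
def Dsq : Set ℂ := {z : ℂ | |z.im| < z.re ∧ |z.im| < 2 - z.re}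

/-- The kernel `K₀(z,w;T)` on the sector `Δ` (and wherever `z² + w̄² ≠ 0`). -/
noncomputable def K0 (z w : ℂ) (T : ℝ) : ℂ :=
  (z * (starRingEnd ℂ) w / (Real.pi : ℂ)) *
    Complex.exp (-(z ^ 2 + ((starRingEnd ℂ) w) ^ 2) / (4 * (T : ℂ))) *
    (1 / (z ^ 2 + ((starRingEnd ℂ) w) ^ 2) ^ 2 +
      1 / (4 * (T : ℂ) * (z ^ 2 + ((starRingEnd ℂ) w) ^ 2)))

set_option maxHeartbeats 1000000

lemma mem_closure_Dsq {z : ℂ} (hz : z ∈ closure Dsq) :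
    |z.im| ≤ z.re ∧ |z.im| ≤ 2 - z.re := by
  have hcl : IsClosed {z : ℂ | |z.im| ≤ z.re ∧ |z.im| ≤ 2 - z.re} := by
    rw [show {z : ℂ | |z.im| ≤ z.re ∧ |z.im| ≤ 2 - z.re}
        = {z : ℂ | |z.im| ≤ z.re} ∩ {z : ℂ | |z.im| ≤ 2 - z.re} from rfl]
    exact IsClosed.inter
      (isClosed_le (_root_.continuous_abs.comp Complex.continuous_im) Complex.continuous_re)
      (isClosed_le (_root_.continuous_abs.comp Complex.continuous_im)
        (continuous_const.sub Complex.continuous_re))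
  refine closure_minimal (fun x hx => ?_) hcl hz
  obtain ⟨a, b⟩ := hx
  exact ⟨a.le, b.le⟩

/-- The "bad" finite index set. -/
noncomputable def Bbad : Finset (ℤ × ℤ) := Finset.Icc (-2) 2 ×ˢ Finset.Icc (-2) 2

lemma not_mem_Bbad {nm : ℤ × ℤ} (h : nm ∉ Bbad) :
    3 ≤ |(nm.1:ℝ)| ∨ 3 ≤ |(nm.2:ℝ)| := by
  by_contra hc
  push_neg at hc
  obtain ⟨h1, h2⟩ := hc
  apply h
  simp only [Bbad, Finset.mem_product, Finset.mem_Icc]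
  rw [← Int.cast_abs] at h1 h2
  have h1' : |nm.1| < 3 := by exact_mod_cast h1
  have h2' : |nm.2| < 3 := by exact_mod_cast h2
  have a1 := abs_lt.mp h1'
  have a2 := abs_lt.mp h2'
  omega
noncomputable def phiT (T : ℝ) (k : ℤ) : ℝ :=
  (2 * |(k:ℝ)| + 3) * Real.exp (-((k:ℝ)^2 - 2*|(k:ℝ)|)/T)

lemma phiT_nonneg (T : ℝ) (k : ℤ) : 0 ≤ phiT T k := by
  unfold phiT; positivity

lemma phiT_summable (T : ℝ) (hT : 0 < T) : Summable (phiT T) := by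
  set r : ℝ := Real.exp (-1/T) with hr
  have hr0 : 0 < r := Real.exp_pos _
  have hr1 : r < 1 := by
    rw [hr]; apply Real.exp_lt_one_iff.mpr
    have : (0:ℝ) < 1/T := by positivity
    rw [neg_div]; linarith
  set c : ℝ := Real.exp (2/T) with hc
  have hψ : Summable (fun j : ℕ => (2*(j:ℝ)+3) * c * r^j) := by
    have h1 : Summable (fun j : ℕ => (j:ℝ)^1 * r^j) :=
      summable_pow_mul_geometric_of_norm_lt_one 1 (by rwa [Real.norm_eq_abs, abs_of_pos hr0])
    have h2 : Summable (fun j : ℕ => r^j) := summable_geometric_of_lt_one hr0.le hr1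
    exact ((h1.mul_left (2*c)).add (h2.mul_left (3*c))).congr (fun j => by push_cast; ring)
  have key : ∀ j : ℕ, phiT T (j:ℤ) ≤ (2*(j:ℝ)+3) * c * r^j := by
    intro j
    unfold phiT
    have habs : |((j:ℤ):ℝ)| = (j:ℝ) := by push_cast; exact abs_of_nonneg (Nat.cast_nonneg j)
    rw [habs]
    have hexp : Real.exp (-((j:ℝ)^2 - 2*(j:ℝ))/T) ≤ c * r^j := by
      have hj : 0 ≤ ((j:ℝ) - 1) * ((j:ℝ) - 2) := by
        rcases Nat.lt_or_ge j 2 with h | h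
        · interval_cases j <;> norm_num
        · have : (2:ℝ) ≤ (j:ℝ) := by exact_mod_cast h
          nlinarith
      have heq : c * r^j = Real.exp ((2 - (j:ℝ))/T) := by
        rw [hc, hr, ← Real.exp_nat_mul, ← Real.exp_add]
        congr 1; field_simp; ring
      rw [heq]
      apply Real.exp_le_exp.mpr
      gcongr
      nlinarith [hj]
    calc (2*(j:ℝ)+3) * Real.exp (-((j:ℝ)^2 - 2*(j:ℝ))/T)
        ≤ (2*(j:ℝ)+3) * (c * r^j) := mul_le_mul_of_nonneg_left hexp (by positivity)
      _ = (2*(j:ℝ)+3) * c * r^j := by ring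
  have hnat : Summable (fun j : ℕ => phiT T (j:ℤ)) :=
    Summable.of_nonneg_of_le (fun j => phiT_nonneg T _) key hψ
  have hneg : Summable (fun j : ℕ => phiT T (-(j:ℤ))) := by
    refine hnat.congr fun j => ?_
    unfold phiT
    push_cast
    rw [abs_neg]
    ring_nf
  exact hnat.of_nat_of_neg hneg
-- elementary real estimate for Re((a+bi+2t)^2) = (a+2t)^2 - b^2
lemma sq_re_bound (a b t : ℝ) (h1 : |b| ≤ a) (h2 : a ≤ 2) :
    4*t^2 - 8*|t| ≤ (a + 2*t)^2 - b^2 := by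
  have ha : 0 ≤ a := (abs_nonneg b).trans h1
  have hb : b^2 ≤ a^2 := by nlinarith [_root_.sq_abs b, abs_nonneg b]
  rcases le_total 0 t with ht | ht
  · rw [_root_.abs_of_nonneg ht]; nlinarith
  · rw [_root_.abs_of_nonpos ht]; nlinarith

lemma K0_term_bound (T : ℝ) (hT : 0 < T) (z w : ℂ)
    (hz1 : |z.im| ≤ z.re) (hz2 : |z.im| ≤ 2 - z.re)
    (hw1 : |w.im| ≤ w.re) (hw2 : |w.im| ≤ 2 - w.re)
    (n m : ℤ) (hnm : 3 ≤ |(n:ℝ)| ∨ 3 ≤ |(m:ℝ)|) :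
    ‖K0 (z + 2*(n:ℂ)) (w + 2*(m:ℂ)) T‖ ≤
      (1/Real.pi) * (1/64 + 1/(32*T)) *
        (((2 * |(n:ℝ)| + 3) * Real.exp (-((n:ℝ)^2 - 2*|(n:ℝ)|)/T)) *
         ((2 * |(m:ℝ)| + 3) * Real.exp (-((m:ℝ)^2 - 2*|(m:ℝ)|)/T))) := by
  set u : ℂ := z + 2*(n:ℂ) with hu
  set v : ℂ := w + 2*(m:ℂ) with hv
  set Q : ℂ := u^2 + ((starRingEnd ℂ) v)^2 with hQ
  have hzre : 0 ≤ z.re := (abs_nonneg _).trans hz1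
  have hzre2 : z.re ≤ 2 := by have := (abs_nonneg z.im).trans hz2; linarith
  have hwre : 0 ≤ w.re := (abs_nonneg _).trans hw1
  have hwre2 : w.re ≤ 2 := by have := (abs_nonneg w.im).trans hw2; linarith
  -- real/imag parts
  have hure : u.re = z.re + 2*(n:ℝ) := by simp [hu]
  have huim : u.im = z.im := by simp [hu]
  have hvb : (starRingEnd ℂ) v = (starRingEnd ℂ) w + 2*(m:ℂ) := by
    rw [hv, map_add, map_mul, map_ofNat, map_intCast]
  have hvre : ((starRingEnd ℂ) v).re = w.re + 2*(m:ℝ) := by simp [hvb]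
  have hvim : ((starRingEnd ℂ) v).im = -w.im := by simp [hvb]
  -- Re of Q
  have hsq : ∀ ζ : ℂ, (ζ^2).re = ζ.re^2 - ζ.im^2 := by
    intro ζ; rw [pow_two, Complex.mul_re]; ring
  have hQre : 4*((n:ℝ)^2 - 2*|(n:ℝ)|) + 4*((m:ℝ)^2 - 2*|(m:ℝ)|) ≤ Q.re := by
    have h1 := sq_re_bound z.re z.im (n:ℝ) hz1 hzre2
    have h2 := sq_re_bound w.re (-w.im) (m:ℝ) (by rwa [abs_neg]) hwre2
    have : Q.re = (u.re^2 - u.im^2) + (((starRingEnd ℂ) v).re^2 - ((starRingEnd ℂ) v).im^2) := by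
      rw [hQ, Complex.add_re, hsq, hsq]
    rw [this, hure, huim, hvre, hvim]
    nlinarith [h1, h2]
  have hR8 : (8:ℝ) ≤ 4*((n:ℝ)^2 - 2*|(n:ℝ)|) + 4*((m:ℝ)^2 - 2*|(m:ℝ)|) := by
    have hn0 : (0:ℝ) ≤ |(n:ℝ)| := abs_nonneg _
    have hm0 : (0:ℝ) ≤ |(m:ℝ)| := abs_nonneg _
    have e1 : (n:ℝ)^2 = |(n:ℝ)|^2 := (_root_.sq_abs _).symm
    have e2 : (m:ℝ)^2 = |(m:ℝ)|^2 := (_root_.sq_abs _).symm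
    rcases hnm with h | h
    · nlinarith [sq_nonneg (|(m:ℝ)| - 1)]
    · nlinarith [sq_nonneg (|(n:ℝ)| - 1)]
  have hQ8 : (8:ℝ) ≤ ‖Q‖ := by
    refine le_trans (le_trans hR8 hQre) (Complex.re_le_norm Q)
  have hQ0 : (0:ℝ) < ‖Q‖ := lt_of_lt_of_le (by norm_num) hQ8
  -- norm of K0 as a product
  have hnorm : ‖K0 u v T‖ = (‖u‖ * ‖v‖ / Real.pi) *
      Real.exp (-Q.re/(4*T)) * ‖1/Q^2 + 1/(4*(T:ℂ)*Q)‖ := by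
    have hcast : (4*(T:ℂ)) = ((4*T:ℝ):ℂ) := by push_cast; ring
    have hre : ((-Q) / (4*(T:ℂ))).re = -Q.re/(4*T) := by
      rw [hcast, Complex.div_ofReal_re, Complex.neg_re]
    rw [K0]
    rw [norm_mul, norm_mul, norm_div, norm_mul]
    rw [Complex.norm_conj, Complex.norm_exp]
    rw [show (-(u ^ 2 + ((starRingEnd ℂ) v) ^ 2) / (4 * (T:ℂ))) = (-Q)/(4*(T:ℂ)) by rw [hQ]]
    rw [hre, Complex.norm_real, Real.norm_eq_abs, _root_.abs_of_pos Real.pi_pos]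
  rw [hnorm]
  -- bounds on each factor
  have habs3 : ‖z‖ ≤ 3 := by
    refine (Complex.norm_le_abs_re_add_abs_im z).trans ?_
    rw [_root_.abs_of_nonneg hzre]; linarith
  have habsw3 : ‖w‖ ≤ 3 := by
    refine (Complex.norm_le_abs_re_add_abs_im w).trans ?_
    rw [_root_.abs_of_nonneg hwre]; linarith
  have hu3 : ‖u‖ ≤ 2*|(n:ℝ)| + 3 := by
    refine (norm_add_le z _).trans ?_
    have : ‖2*(n:ℂ)‖ = 2*|(n:ℝ)| := by
      rw [norm_mul]
      simp [Complex.norm_intCast]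
    rw [this]; linarith
  have hv3 : ‖v‖ ≤ 2*|(m:ℝ)| + 3 := by
    refine (norm_add_le w _).trans ?_
    have : ‖2*(m:ℂ)‖ = 2*|(m:ℝ)| := by
      rw [norm_mul]
      simp [Complex.norm_intCast]
    rw [this]; linarith
  have hexp : Real.exp (-Q.re/(4*T)) ≤
      Real.exp (-((n:ℝ)^2 - 2*|(n:ℝ)|)/T) * Real.exp (-((m:ℝ)^2 - 2*|(m:ℝ)|)/T) := by
    rw [← Real.exp_add]
    apply Real.exp_le_exp.mpr
    have step2 : (-((n:ℝ)^2 - 2*|(n:ℝ)|)/T + -((m:ℝ)^2 - 2*|(m:ℝ)|)/T)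
        = -(4*((n:ℝ)^2 - 2*|(n:ℝ)|) + 4*((m:ℝ)^2 - 2*|(m:ℝ)|))/(4*T) := by
      field_simp; ring
    rw [step2]
    exact (div_le_div_iff_of_pos_right (by linarith : (0:ℝ) < 4*T)).mpr (by linarith [hQre])
  have hlast : ‖1/Q^2 + 1/(4*(T:ℂ)*Q)‖ ≤ 1/64 + 1/(32*T) := by
    refine (norm_add_le _ _).trans ?_
    have e1 : ‖1/Q^2‖ = 1/(‖Q‖)^2 := by
      rw [norm_div, norm_pow, norm_one]
    have e2 : ‖1/(4*(T:ℂ)*Q)‖ = 1/(4*T*‖Q‖) := by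
      rw [norm_div, norm_one, norm_mul, norm_mul, Complex.norm_ofNat, Complex.norm_real, Real.norm_eq_abs,
        _root_.abs_of_pos hT]
    rw [e1, e2]
    have b1 : 1/(‖Q‖)^2 ≤ 1/64 := by
      apply one_div_le_one_div_of_le (by norm_num)
      nlinarith
    have b2 : 1/(4*T*‖Q‖) ≤ 1/(32*T) := by
      apply one_div_le_one_div_of_le (by positivity)
      nlinarith
    linarith
  calc (‖u‖ * ‖v‖ / Real.pi) * Real.exp (-Q.re/(4*T)) *
        ‖1/Q^2 + 1/(4*(T:ℂ)*Q)‖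
      ≤ ((2*|(n:ℝ)|+3) * (2*|(m:ℝ)|+3) / Real.pi) *
          (Real.exp (-((n:ℝ)^2 - 2*|(n:ℝ)|)/T) * Real.exp (-((m:ℝ)^2 - 2*|(m:ℝ)|)/T)) *
          (1/64 + 1/(32*T)) := by
        have h1 : ‖u‖ * ‖v‖ / Real.pi ≤
            (2*|(n:ℝ)|+3) * (2*|(m:ℝ)|+3) / Real.pi := by
          gcongr <;> positivity
        have hprod : (0:ℝ) ≤ ‖u‖ * ‖v‖ / Real.pi := by positivity
        apply mul_le_mul
        · apply mul_le_mul h1 hexp (Real.exp_nonneg _) (by positivity)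
        · exact hlast
        · exact norm_nonneg _
        · positivity
    _ = (1/Real.pi) * (1/64 + 1/(32*T)) *
        (((2 * |(n:ℝ)| + 3) * Real.exp (-((n:ℝ)^2 - 2*|(n:ℝ)|)/T)) *
         ((2 * |(m:ℝ)| + 3) * Real.exp (-((m:ℝ)^2 - 2*|(m:ℝ)|)/T))) := by ring

/-- For `T > 0`, the double series `Σ_{m,n∈ℤ} K₀(z+2n, w+2m; T)` converges absolutely
for each `(z,w) ∈ cl(D) × D`, and the net of finite partial sums converges uniformly
on `cl(D) × D`. -/
theorem K0_series_converges (T : ℝ) (hT : 0 < T) :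
    (∀ z ∈ closure Dsq, ∀ w ∈ Dsq,
      Summable (fun p : ℤ × ℤ => ‖K0 (z + 2 * (p.1 : ℂ)) (w + 2 * (p.2 : ℂ)) T‖)) ∧
    ∃ K : ℂ × ℂ → ℂ,
      TendstoUniformlyOn
        (fun (s : Finset (ℤ × ℤ)) (p : ℂ × ℂ) =>
          ∑ nm ∈ s, K0 (p.1 + 2 * (nm.1 : ℂ)) (p.2 + 2 * (nm.2 : ℂ)) T)
        K atTop (closure Dsq ×ˢ Dsq) := by
  set S : Set (ℂ × ℂ) := closure Dsq ×ˢ Dsq with hS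
  set f : ℤ × ℤ → ℂ × ℂ → ℂ :=
    fun nm p => K0 (p.1 + 2 * (nm.1 : ℂ)) (p.2 + 2 * (nm.2 : ℂ)) T with hf
  set M : ℤ × ℤ → ℝ :=
    fun nm => (1/Real.pi) * (1/64 + 1/(32*T)) * (phiT T nm.1 * phiT T nm.2) with hM
  have hMsummable : Summable M := by
    have h2 : Summable (fun nm : ℤ × ℤ => phiT T nm.1 * phiT T nm.2) :=
      (phiT_summable T hT).mul_of_nonneg (phiT_summable T hT)
        (fun k => phiT_nonneg T k) (fun k => phiT_nonneg T k)
    exact h2.mul_left _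
  -- the key uniform bound, away from Bbad
  have hbound : ∀ nm : ℤ × ℤ, nm ∉ Bbad → ∀ p ∈ S, ‖f nm p‖ ≤ M nm := by
    rintro ⟨n, m⟩ hnm ⟨z, w⟩ hp
    obtain ⟨hz, hw⟩ := hp
    obtain ⟨hz1, hz2⟩ := mem_closure_Dsq hz
    obtain ⟨hw1, hw2⟩ := hw
    exact K0_term_bound T hT z w hz1 hz2 hw1.le hw2.le n m (not_mem_Bbad hnm)
  constructor
  · -- pointwise absolute convergence
    intro z hz w hw
    apply Summable.of_norm_bounded_eventually hMsummable
    rw [Filter.eventually_cofinite]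
    apply Set.Finite.subset Bbad.finite_toSet
    intro nm hnm
    by_contra hb
    apply hnm
    rw [norm_norm]
    exact hbound nm hb (z, w) ⟨hz, hw⟩
  · -- uniform convergence
    set g : ℤ × ℤ → ℂ × ℂ → ℂ := fun nm p => if nm ∈ Bbad then 0 else f nm p with hg
    set M' : ℤ × ℤ → ℝ := fun nm => if nm ∈ Bbad then 0 else M nm with hM'
    have hMnonneg : ∀ nm : ℤ × ℤ, 0 ≤ M nm := by
      intro nm
      rw [hM]
      have := Real.pi_pos
      have h1 := phiT_nonneg T nm.1
      have h2 := phiT_nonneg T nm.2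
      positivity
    have hM'sum : Summable M' := by
      refine Summable.of_nonneg_of_le (fun nm => ?_) (fun nm => ?_) hMsummable
      · rw [hM']; dsimp only; split
        · rfl
        · exact hMnonneg nm
      · rw [hM']; dsimp only; split
        · exact hMnonneg nm
        · rfl
    have hgbound : ∀ nm : ℤ × ℤ, ∀ p ∈ S, ‖g nm p‖ ≤ M' nm := by
      intro nm p hp
      rw [hg, hM']
      dsimp only
      split
      · simp
      · next hnb => exact hbound nm hnb p hp
    -- uniform convergence of the series of g
    have hGlim : TendstoUniformlyOn (fun s p => ∑ nm ∈ s, g nm p)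
        (fun p => ∑' nm, g nm p) atTop S :=
      tendstoUniformlyOn_tsum hM'sum hgbound
    -- constant part
    set c : ℂ × ℂ → ℂ := fun p => ∑ nm ∈ Bbad, f nm p with hc
    have hClim : TendstoUniformlyOn (fun _ : Finset (ℤ × ℤ) => c) c atTop S := by
      intro u hu
      exact Filter.Eventually.of_forall (fun s p _ => refl_mem_uniformity hu)
    have hsum := hGlim.add hClim
    refine ⟨(fun p => ∑' nm, g nm p) + c, hsum.congr ?_⟩
    filter_upwards [Filter.eventually_ge_atTop Bbad] with s hBs p _
    have hsplit : ∑ nm ∈ Bbad, f nm p = ∑ nm ∈ s, (if nm ∈ Bbad then f nm p else 0) := by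
      rw [Finset.sum_ite_mem, Finset.inter_eq_right.mpr hBs]
    show (∑ nm ∈ s, g nm p) + c p = ∑ nm ∈ s, f nm p
    rw [hc]
    dsimp only
    rw [hsplit, ← Finset.sum_add_distrib]
    apply Finset.sum_congr rfl
    intro nm _
    rw [hg]
    dsimp only
    split
    · rw [zero_add]
    · rw [add_zero]
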